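/- Let G : [0,∞) → (0,∞) be continuous with t^{n+r} G(t) decreasing on (1,∞) and t^{n+r} G(t) → 0 as t → ∞. Let μ be a positive Radon measure on ℝⁿ supported in B(x₀,1) with μ(B(x₀,ε)) = o(ε^{n+r}) as ε → 0⁺ and ∫ |x−x₀|^{−n−r} dμ(x) = C < ∞. Then for every A > 1, limsup_{ε→0⁺} ε^{−n−r} ∫_{ℝⁿ} G(|x−x₀|/ε) dμ(x) ≤ C A^{n+r} G(A). -/

import Mathlib

open MeasureTheory Metric Filter Topology

theorem limsup_kernel_bound (n r : ℕ) (G : ℝ → ℝ) (hGc : Continuous G)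
    (hGpos : ∀ t ≥ (0:ℝ), 0 < G t)
    (hGdec : AntitoneOn (fun t => t ^ (n + r) * G t) (Set.Ioi 1))
    (hGlim : Tendsto (fun t => t ^ (n + r) * G t) atTop (𝓝 0))
    (μ : Measure (EuclideanSpace ℝ (Fin n))) [IsFiniteMeasure μ]
    (x₀ : EuclideanSpace ℝ (Fin n))
    (hsupp : μ (closedBall x₀ 1)ᶜ = 0) (hpt : μ {x₀} = 0)
    (hsmall : Tendsto (fun ε : ℝ => (μ (ball x₀ ε)).toReal / ε ^ (n + r)) (𝓝[>] 0) (𝓝 0))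
    (C : ℝ)
    (hinteg : Integrable (fun x => ‖x - x₀‖ ^ (-((n : ℝ) + r))) μ)
    (hint : ∫ x, ‖x - x₀‖ ^ (-((n : ℝ) + r)) ∂μ = C)
    (A : ℝ) (hA : 1 < A) :
    Filter.limsup (fun ε : ℝ => ε ^ (-((n : ℝ) + r)) * ∫ x, G (‖x - x₀‖ / ε) ∂μ) (𝓝[>] 0)
      ≤ C * A ^ (n + r) * G A := by
  have hA0 : (0:ℝ) < A := lt_trans one_pos hA
  set k := n + r with hk
  have hcast : ((n:ℝ) + r) = (k:ℝ) := by push_cast [hk]; ring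
  have hCnn : 0 ≤ C := by
    rw [← hint]
    exact integral_nonneg fun x => Real.rpow_nonneg (norm_nonneg _) _
  have hGA : 0 < G A := hGpos A hA0.le
  -- max of G on [0, A]
  obtain ⟨z, hz, hzmax⟩ := (isCompact_Icc (a := (0:ℝ)) (b := A)).exists_isMaxOn
    ⟨0, le_refl 0, hA0.le⟩ hGc.continuousOn
  set M := G z with hM
  have hMpos : 0 < M := hGpos z hz.1
  -- eventual nonnegativity
  have hF0 : ∀ᶠ ε in 𝓝[>] (0:ℝ), 0 ≤ ε ^ (-((n : ℝ) + r)) * ∫ x, G (‖x - x₀‖ / ε) ∂μ := by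
    filter_upwards [self_mem_nhdsWithin] with ε (hε : (0:ℝ) < ε)
    apply mul_nonneg (Real.rpow_nonneg hε.le _)
    exact integral_nonneg fun x => (hGpos _ (by positivity)).le
  have cobdd : IsCoboundedUnder (· ≤ ·) (𝓝[>] (0:ℝ))
      (fun ε : ℝ => ε ^ (-((n : ℝ) + r)) * ∫ x, G (‖x - x₀‖ / ε) ∂μ) := by
    refine Filter.IsBoundedUnder.isCoboundedUnder_le ⟨0, ?_⟩
    simpa [eventually_map] using hF0
  -- rescaled smallness
  have hsmall2 : Tendsto (fun ε : ℝ => (μ (ball x₀ (2 * A * ε))).toReal / ε ^ k)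
      (𝓝[>] (0:ℝ)) (𝓝 0) := by
    have hmap : Tendsto (fun ε : ℝ => 2 * A * ε) (𝓝[>] (0:ℝ)) (𝓝[>] (0:ℝ)) := by
      apply tendsto_nhdsWithin_of_tendsto_nhds_of_eventually_within
      · have := (tendsto_id.const_mul (2 * A) : Tendsto (fun ε : ℝ => 2 * A * ε) (𝓝 0) (𝓝 (2 * A * 0)))
        simpa using this.mono_left nhdsWithin_le_nhds
      · filter_upwards [self_mem_nhdsWithin] with ε (hε : (0:ℝ) < ε)
        have : (0:ℝ) < 2 * A * ε := by positivity
        exact this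
    have hcomp := hsmall.comp hmap
    have hmul := hcomp.const_mul ((2 * A) ^ k)
    rw [mul_zero] at hmul
    refine hmul.congr' ?_
    filter_upwards [self_mem_nhdsWithin] with ε (hε : (0:ℝ) < ε)
    have h2A : (0:ℝ) < 2 * A := by positivity
    show (2 * A) ^ k * ((μ (ball x₀ (2 * A * ε))).toReal / (2 * A * ε) ^ k) = _
    rw [mul_pow]
    field_simp
    rw [mul_pow, mul_pow]
    ring
  -- the main eventual bound
  have key : ∀ δ : ℝ, 0 < δ → ∀ᶠ ε in 𝓝[>] (0:ℝ),
      ε ^ (-((n : ℝ) + r)) * ∫ x, G (‖x - x₀‖ / ε) ∂μ ≤ C * A ^ k * G A + δ := by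
    intro δ hδ
    have hδM : (0:ℝ) < δ / M := by positivity
    filter_upwards [self_mem_nhdsWithin, hsmall2.eventually_lt_const hδM] with ε
      (hε : (0:ℝ) < ε) hgε
    have hεk : (0:ℝ) < ε ^ k := by positivity
    -- integrability of the kernel
    have hcont : Continuous (fun x : EuclideanSpace ℝ (Fin n) => G (‖x - x₀‖ / ε)) :=
      hGc.comp ((continuous_norm.comp (continuous_id.sub continuous_const)).div_const ε)
    obtain ⟨w, hw, hwmax⟩ := (isCompact_Icc (a := (0:ℝ)) (b := 1/ε)).exists_isMaxOn
      ⟨0, le_refl 0, by positivity⟩ hGc.continuousOn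
    have haes : ∀ᵐ x ∂μ, x ∈ closedBall x₀ 1 := by
      rw [ae_iff]
      simpa [Set.compl_def] using hsupp
    have hfint : Integrable (fun x => G (‖x - x₀‖ / ε)) μ := by
      refine Integrable.mono' (integrable_const (G w)) hcont.aestronglyMeasurable ?_
      filter_upwards [haes] with x hx
      have hx1 : ‖x - x₀‖ ≤ 1 := by simpa [mem_closedBall, dist_eq_norm] using hx
      have harg : ‖x - x₀‖ / ε ∈ Set.Icc (0:ℝ) (1/ε) :=
        ⟨by positivity, by gcongr⟩
      rw [Real.norm_of_nonneg (hGpos _ harg.1).le]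
      exact hwmax harg
    set s := closedBall x₀ (A * ε) with hs
    have hsplit : ∫ x, G (‖x - x₀‖ / ε) ∂μ
        = (∫ x in s, G (‖x - x₀‖ / ε) ∂μ) + ∫ x in sᶜ, G (‖x - x₀‖ / ε) ∂μ :=
      (integral_add_compl measurableSet_closedBall hfint).symm
    -- inner bound
    have hinner : ∫ x in s, G (‖x - x₀‖ / ε) ∂μ ≤ (μ (ball x₀ (2 * A * ε))).toReal * M := by
      have h1 : ∫ x in s, G (‖x - x₀‖ / ε) ∂μ ≤ ∫ _x in s, M ∂μ := by
        refine setIntegral_mono_on hfint.integrableOn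
          (integrableOn_const (measure_ne_top μ s)) measurableSet_closedBall ?_
        intro x hx
        have hxd : ‖x - x₀‖ ≤ A * ε := by simpa [hs, mem_closedBall, dist_eq_norm] using hx
        refine hzmax ⟨by positivity, ?_⟩
        rw [div_le_iff₀ hε]
        linarith
      rw [setIntegral_const, smul_eq_mul] at h1
      refine h1.trans ?_
      have hsub : s ⊆ ball x₀ (2 * A * ε) := by
        apply closedBall_subset_ball
        nlinarith
      have := ENNReal.toReal_mono (measure_ne_top μ _) (measure_mono hsub)
      exact mul_le_mul_of_nonneg_right this hMpos.le
    -- outer bound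
    have houter : ∫ x in sᶜ, G (‖x - x₀‖ / ε) ∂μ ≤ A ^ k * G A * ε ^ k * C := by
      have hb : ∀ x ∈ sᶜ, G (‖x - x₀‖ / ε)
          ≤ A ^ k * G A * ε ^ k * ‖x - x₀‖ ^ (-((n:ℝ) + r)) := by
        intro x hx
        have hd : A * ε < ‖x - x₀‖ := by
          simpa [hs, mem_closedBall, dist_eq_norm, not_le] using hx
        have hdpos : (0:ℝ) < ‖x - x₀‖ := lt_trans (by positivity) hd
        have htA : A < ‖x - x₀‖ / ε := (lt_div_iff₀ hε).2 (by linarith)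
        have ht1 : (1:ℝ) < ‖x - x₀‖ / ε := lt_trans hA htA
        have h1 := hGdec (Set.mem_Ioi.2 hA) (Set.mem_Ioi.2 ht1) htA.le
        simp only at h1
        have hrpow : ‖x - x₀‖ ^ (-((n:ℝ) + r)) = ((‖x - x₀‖ ^ k)⁻¹ : ℝ) := by
          rw [hcast, Real.rpow_neg (norm_nonneg _), Real.rpow_natCast]
        rw [hrpow]
        have h2 : G (‖x - x₀‖ / ε) * ‖x - x₀‖ ^ k ≤ A ^ k * G A * ε ^ k := by
          rw [div_pow] at h1
          have heq : G (‖x - x₀‖ / ε) * ‖x - x₀‖ ^ k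
              = (‖x - x₀‖ ^ k / ε ^ k * G (‖x - x₀‖ / ε)) * ε ^ k := by
            field_simp
          rw [heq]
          calc (‖x - x₀‖ ^ k / ε ^ k * G (‖x - x₀‖ / ε)) * ε ^ k
              ≤ (A ^ k * G A) * ε ^ k := mul_le_mul_of_nonneg_right h1 hεk.le
            _ = A ^ k * G A * ε ^ k := by ring
        rw [← div_eq_mul_inv, le_div_iff₀ (by positivity)]
        exact h2
      have h3 : ∫ x in sᶜ, G (‖x - x₀‖ / ε) ∂μ
          ≤ ∫ x in sᶜ, A ^ k * G A * ε ^ k * ‖x - x₀‖ ^ (-((n:ℝ) + r)) ∂μ := by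
        refine setIntegral_mono_on hfint.integrableOn
          ((hinteg.const_mul _).integrableOn) measurableSet_closedBall.compl hb
      refine h3.trans ?_
      rw [integral_const_mul]
      have h4 : ∫ x in sᶜ, ‖x - x₀‖ ^ (-((n:ℝ) + r)) ∂μ ≤ C := by
        rw [← hint]
        exact setIntegral_le_integral hinteg
          (ae_of_all _ fun x => Real.rpow_nonneg (norm_nonneg _) _)
      exact mul_le_mul_of_nonneg_left h4 (by positivity)
    -- combine
    have hεrpow : ε ^ (-((n:ℝ) + r)) = (ε ^ k)⁻¹ := by
      rw [hcast, Real.rpow_neg hε.le, Real.rpow_natCast]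
    rw [hεrpow, hsplit]
    have hm : (μ (ball x₀ (2 * A * ε))).toReal < δ / M * ε ^ k := by
      rw [div_lt_iff₀ hεk] at hgε
      linarith
    have hI : (∫ x in s, G (‖x - x₀‖ / ε) ∂μ) + ∫ x in sᶜ, G (‖x - x₀‖ / ε) ∂μ
        ≤ (δ / M * ε ^ k) * M + A ^ k * G A * ε ^ k * C := by
      have : ∫ x in s, G (‖x - x₀‖ / ε) ∂μ ≤ (δ / M * ε ^ k) * M :=
        hinner.trans (mul_le_mul_of_nonneg_right hm.le hMpos.le)
      linarith
    calc (ε ^ k)⁻¹ * ((∫ x in s, G (‖x - x₀‖ / ε) ∂μ) + ∫ x in sᶜ, G (‖x - x₀‖ / ε) ∂μ)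
        ≤ (ε ^ k)⁻¹ * ((δ / M * ε ^ k) * M + A ^ k * G A * ε ^ k * C) := by
          exact mul_le_mul_of_nonneg_left hI (by positivity)
      _ = C * A ^ k * G A + δ := by
          field_simp
          ring
  refine le_of_forall_pos_le_add fun δ hδ => ?_
  exact Filter.limsup_le_of_le cobdd (key δ hδ)
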